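/- For a symmetric base density f₀ about 0 on [-π,π), the p-th cosine moment of the extended sine-skewed density f(θ) = 2 f₀(θ) G_m(λ sin θ) equals the p-th cosine moment of f₀: ∫_{-π}^{π} cos(pθ) · 2 f₀(θ) G_m(λ sin θ) dθ = ∫_{-π}^{π} cos(pθ) f₀(θ) dθ for every integer p. -/

import Mathlib

open Real MeasureTheory intervalIntegral

/-- Normalizing constant `C_m = Γ(2(m+1)) / (2^{2m+1} Γ(m+1)^2)`. -/
noncomputable def Cm (m : ℕ) : ℝ :=
  Real.Gamma (2 * (m + 1)) / (2 ^ (2 * m + 1) * Real.Gamma (m + 1) ^ 2)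

/-- The density `g_m(x) = C_m (1 - x^2)^m`. -/
noncomputable def gm (m : ℕ) (x : ℝ) : ℝ := Cm m * (1 - x ^ 2) ^ m

/-- The distribution function `G_m(x) = ∫_{-1}^x g_m`. -/
noncomputable def Gm (m : ℕ) (x : ℝ) : ℝ := ∫ t in (-1 : ℝ)..x, gm m t

/-- The `p`-th cosine moment of the ESS density equals that of the base density. -/

lemma hF_deriv (m : ℕ) (x : ℝ) :
    HasDerivAt (fun x : ℝ => x * (1 - x ^ 2) ^ (m + 1))
      ((2 * m + 3) * (1 - x ^ 2) ^ (m + 1) - (2 * (m + 1)) * (1 - x ^ 2) ^ m) x := by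
  have h1 : HasDerivAt (fun x : ℝ => (1 - x ^ 2) ^ (m + 1))
      ((m + 1 : ℕ) * (1 - x ^ 2) ^ m * (-(2 * x))) x := by
    have := ((hasDerivAt_pow 2 x).const_sub 1).fun_pow (m + 1)
    simpa using this
  have h : HasDerivAt (fun x : ℝ => x * (1 - x ^ 2) ^ (m + 1))
      (1 * (1 - x ^ 2) ^ (m + 1) + x * (((m + 1 : ℕ) : ℝ) * (1 - x ^ 2) ^ m * -(2 * x))) x :=
    (hasDerivAt_id' (x := x)).fun_mul h1
  convert h using 1
  push_cast
  ring

lemma Jrec (m : ℕ) :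
    (2 * m + 3 : ℝ) * ∫ x in (-1:ℝ)..1, (1 - x ^ 2) ^ (m + 1)
      = (2 * (m + 1)) * ∫ x in (-1:ℝ)..1, (1 - x ^ 2) ^ m := by
  have hc : ∀ k : ℕ, IntervalIntegrable (fun x : ℝ => (1 - x ^ 2) ^ k) volume (-1) 1 := by
    intro k
    exact (Continuous.pow (by continuity) k).intervalIntegrable _ _
  have h := intervalIntegral.integral_eq_sub_of_hasDerivAt
    (fun x _ => hF_deriv m x)
    (((hc (m+1)).const_mul _).sub ((hc m).const_mul _))
  rw [intervalIntegral.integral_sub ((hc (m+1)).const_mul _) ((hc m).const_mul _),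
    intervalIntegral.integral_const_mul, intervalIntegral.integral_const_mul] at h
  norm_num at h
  linarith

lemma Jval (m : ℕ) : ∫ x in (-1:ℝ)..1, (1 - x ^ 2) ^ m
    = 2 ^ (2 * m + 1) * (m.factorial : ℝ) ^ 2 / (2 * m + 1).factorial := by
  induction m with
  | zero => norm_num
  | succ n ih =>
    have h := Jrec n
    rw [ih] at h
    have h3 : (2 * n + 3 : ℝ) ≠ 0 := by positivity
    have hf : ((2 * n + 1).factorial : ℝ) ≠ 0 := Nat.cast_ne_zero.2 (Nat.factorial_ne_zero _)
    have hfact : ((2 * (n + 1) + 1).factorial : ℝ)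
        = (2 * n + 3) * ((2 * n + 2) * (2 * n + 1).factorial) := by
      have : 2 * (n + 1) + 1 = (2 * n + 2) + 1 := by ring
      rw [this, Nat.factorial_succ]
      have : 2 * n + 2 = (2 * n + 1) + 1 := by ring
      rw [this, Nat.factorial_succ]
      push_cast
      ring
    have hsucc : ((n + 1).factorial : ℝ) = (n + 1) * n.factorial := by
      rw [Nat.factorial_succ]; push_cast; ring
    field_simp [hfact, hsucc] at h ⊢
    push_cast at h ⊢
    rw [hfact, hsucc]
    linear_combination (2*(n:ℝ)+2) * h

lemma gm_cont (m : ℕ) : Continuous (gm m) := by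
  unfold gm; fun_prop

lemma gm_intint (m : ℕ) (a b : ℝ) : IntervalIntegrable (gm m) volume a b :=
  (gm_cont m).intervalIntegrable a b

lemma Gm_one (m : ℕ) : Gm m 1 = 1 := by
  unfold Gm gm
  rw [intervalIntegral.integral_const_mul, Jval]
  unfold Cm
  have h1 : Real.Gamma (2 * ((m : ℝ) + 1)) = ((2 * m + 1).factorial : ℝ) := by
    have : 2 * ((m : ℝ) + 1) = ((2 * m + 1 : ℕ) : ℝ) + 1 := by push_cast; ring
    rw [this, Real.Gamma_nat_eq_factorial]
  have h2 : Real.Gamma ((m : ℝ) + 1) = (m.factorial : ℝ) := Real.Gamma_nat_eq_factorial m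
  push_cast
  rw [h1, h2]
  have hf1 : ((2 * m + 1).factorial : ℝ) ≠ 0 := Nat.cast_ne_zero.2 (Nat.factorial_ne_zero _)
  have hf2 : (m.factorial : ℝ) ≠ 0 := Nat.cast_ne_zero.2 (Nat.factorial_ne_zero _)
  have hp : (2 : ℝ) ^ (2 * m + 1) ≠ 0 := by positivity
  field_simp

lemma Gm_even_sum (m : ℕ) (x : ℝ) : Gm m x + Gm m (-x) = 1 := by
  have heven : ∀ t : ℝ, gm m (-t) = gm m t := by intro t; simp [gm]
  have h1 : Gm m (-x) = ∫ t in x..(1:ℝ), gm m t := by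
    unfold Gm
    have : (∫ t in (-1:ℝ)..(-x), gm m t) = ∫ t in (-1:ℝ)..(-x), gm m (-t) := by
      simp_rw [heven]
    rw [this, intervalIntegral.integral_comp_neg]
    norm_num
  rw [h1]
  unfold Gm
  rw [intervalIntegral.integral_add_adjacent_intervals (gm_intint m _ _) (gm_intint m _ _)]
  exact Gm_one m

lemma Gm_continuous (m : ℕ) : Continuous (Gm m) :=
  intervalIntegral.continuous_primitive (fun a b => gm_intint m a b) (-1)

theorem ess_cosine_moment (m : ℕ) (f₀ : ℝ → ℝ) (lam : ℝ) (p : ℤ)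
    (hlam : lam ∈ Set.Icc (-1 : ℝ) 1)
    (hper : Function.Periodic f₀ (2 * π))
    (hsym : ∀ θ, f₀ (-θ) = f₀ θ)
    (hpos : ∀ θ, 0 ≤ f₀ θ)
    (hmeas : Measurable f₀)
    (hint : IntervalIntegrable f₀ MeasureTheory.volume (-π) π)
    (hdens : ∫ θ in (-π)..π, f₀ θ = 1) :
    (∫ θ in (-π)..π, Real.cos (p * θ) * (2 * f₀ θ * Gm m (lam * Real.sin θ)))
      = ∫ θ in (-π)..π, Real.cos (p * θ) * f₀ θ := by
  set F : ℝ → ℝ := fun θ => Real.cos (p * θ) * (2 * f₀ θ * Gm m (lam * Real.sin θ)) with hF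
  set F' : ℝ → ℝ := fun θ => Real.cos (p * θ) * (2 * f₀ θ * Gm m (-(lam * Real.sin θ))) with hF'
  have hcont : ∀ s : ℝ, Continuous fun θ : ℝ =>
      Real.cos (p * θ) * 2 * Gm m (s * Real.sin θ) := by
    intro s
    exact ((Real.continuous_cos.comp (continuous_const.mul continuous_id)).mul
      continuous_const).mul ((Gm_continuous m).comp (continuous_const.mul Real.continuous_sin))
  have hIntF : IntervalIntegrable F volume (-π) π := by
    have : F = fun θ => f₀ θ * (Real.cos (p * θ) * 2 * Gm m (lam * Real.sin θ)) := by
      funext θ; simp [hF]; ring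
    rw [this]
    exact hint.mul_continuousOn (hcont lam).continuousOn
  have hIntF' : IntervalIntegrable F' volume (-π) π := by
    have : F' = fun θ => f₀ θ * (Real.cos (p * θ) * 2 * Gm m ((-lam) * Real.sin θ)) := by
      funext θ; simp [hF']; ring
    rw [this]
    exact hint.mul_continuousOn (hcont (-lam)).continuousOn
  have hneg : (∫ θ in (-π)..π, F θ) = ∫ θ in (-π)..π, F' θ := by
    have h1 : (∫ θ in (-π)..π, F (-θ)) = ∫ θ in (-π)..π, F θ := by
      rw [intervalIntegral.integral_comp_neg]; norm_num
    have h2 : ∀ θ, F (-θ) = F' θ := by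
      intro θ
      simp [hF, hF', hsym, Real.sin_neg, Real.cos_neg, mul_neg, neg_mul]
    rw [← h1]
    simp_rw [h2]
  have hsum : ∀ θ, F θ + F' θ = 2 * (Real.cos (p * θ) * f₀ θ) := by
    intro θ
    have := Gm_even_sum m (lam * Real.sin θ)
    simp only [hF, hF']
    linear_combination (Real.cos (p * θ) * (2 * f₀ θ)) * this
  have hkey : (∫ θ in (-π)..π, F θ) + (∫ θ in (-π)..π, F' θ)
      = 2 * ∫ θ in (-π)..π, Real.cos (p * θ) * f₀ θ := by
    rw [← intervalIntegral.integral_add hIntF hIntF']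
    simp_rw [hsum]
    rw [intervalIntegral.integral_const_mul]
  rw [← hneg] at hkey
  linarith
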